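/- Let μ ∈ P₂(ℝ^d), let ν₁,…,ν_m ∈ P₂(ℝ^d), let λ ∈ Δ^m, and let T₁,…,T_m : ℝ^d → ℝ^d be measurable maps such that the pushforward (T_j)_#μ ≤_c ν_j for each 1 ≤ j ≤ m, and such that the pushforward of μ under x ↦ ∑_{j=1}^m λ_j T_j(x) equals μ. Then μ ≤_c ∑_{j=1}^m λ_j ν_j, where ∑_j λ_j ν_j denotes the mixture measure. -/

import Mathlib

open MeasureTheory ENNReal

/-- `μ ∈ P₂(ℝ^d)`: a Borel probability measure with finite second moment. -/
def MemP2 {d : ℕ} (μ : Measure (EuclideanSpace ℝ (Fin d))) : Prop :=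
  IsProbabilityMeasure μ ∧ Integrable (fun x => ‖x‖ ^ 2) μ

/-- Convex order: `μ ≤_c ν` iff `∫ φ dμ ≤ ∫ φ dν` (as integrals in `[0,∞]`)
for every convex `φ : ℝ^d → [0,∞)`. -/
def ConvexOrder {d : ℕ} (μ ν : Measure (EuclideanSpace ℝ (Fin d))) : Prop :=
  ∀ φ : EuclideanSpace ℝ (Fin d) → ℝ, ConvexOn ℝ Set.univ φ → (∀ x, 0 ≤ φ x) →
    ∫⁻ x, ENNReal.ofReal (φ x) ∂μ ≤ ∫⁻ x, ENNReal.ofReal (φ x) ∂ν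

/-- If `(T_j)_#μ ≤_c ν_j` for each `j` and `x ↦ ∑ λ_j T_j(x)` pushes `μ` forward to
itself, then `μ ≤_c ∑ λ_j ν_j`. -/
theorem critical_point_convex_order_mixture
    {d m : ℕ}
    (μ : Measure (EuclideanSpace ℝ (Fin d))) (hμ : MemP2 μ)
    (ν : Fin m → Measure (EuclideanSpace ℝ (Fin d))) (hν : ∀ j, MemP2 (ν j))
    (lam : Fin m → ℝ) (hlam0 : ∀ j, 0 ≤ lam j) (hlam1 : ∑ j, lam j = 1)
    (T : Fin m → EuclideanSpace ℝ (Fin d) → EuclideanSpace ℝ (Fin d))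
    (hTm : ∀ j, Measurable (T j))
    (hTc : ∀ j, ConvexOrder (μ.map (T j)) (ν j))
    (hfix : μ.map (fun x => ∑ j, lam j • T j x) = μ) :
    ConvexOrder μ (∑ j, ENNReal.ofReal (lam j) • ν j) := by
  intro φ hφ hφ0
  have hφc : Continuous φ := by
    rw [← continuousOn_univ]
    exact hφ.continuousOn isOpen_univ
  have hφm : Measurable fun x => ENNReal.ofReal (φ x) :=
    ENNReal.measurable_ofReal.comp hφc.measurable
  have hj : ∀ j, Measurable fun x => ENNReal.ofReal (φ (T j x)) := fun j =>
    hφm.comp (hTm j)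
  have hSm : Measurable fun x => ∑ j, lam j • T j x := by
    exact Finset.measurable_sum _ fun j _ => (hTm j).const_smul (lam j)
  calc ∫⁻ x, ENNReal.ofReal (φ x) ∂μ
      = ∫⁻ x, ENNReal.ofReal (φ x) ∂(μ.map (fun x => ∑ j, lam j • T j x)) := by rw [hfix]
    _ = ∫⁻ x, ENNReal.ofReal (φ (∑ j, lam j • T j x)) ∂μ := lintegral_map hφm hSm
    _ ≤ ∫⁻ x, ∑ j, ENNReal.ofReal (lam j) * ENNReal.ofReal (φ (T j x)) ∂μ := by
        refine lintegral_mono fun x => ?_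
        calc ENNReal.ofReal (φ (∑ j, lam j • T j x))
            ≤ ENNReal.ofReal (∑ j, lam j * φ (T j x)) :=
              ENNReal.ofReal_le_ofReal
                (hφ.map_sum_le (fun j _ => hlam0 j) hlam1 (fun j _ => Set.mem_univ _))
          _ = ∑ j, ENNReal.ofReal (lam j) * ENNReal.ofReal (φ (T j x)) := by
              rw [ENNReal.ofReal_sum_of_nonneg fun j _ =>
                mul_nonneg (hlam0 j) (hφ0 _)]
              exact Finset.sum_congr rfl fun j _ => ENNReal.ofReal_mul (hlam0 j)
    _ = ∑ j, ENNReal.ofReal (lam j) * ∫⁻ x, ENNReal.ofReal (φ (T j x)) ∂μ := by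
        rw [lintegral_finset_sum _ fun j _ => (hj j).const_mul _]
        exact Finset.sum_congr rfl fun j _ => lintegral_const_mul _ (hj j)
    _ ≤ ∑ j, ENNReal.ofReal (lam j) * ∫⁻ x, ENNReal.ofReal (φ x) ∂(ν j) := by
        refine Finset.sum_le_sum fun j _ => mul_le_mul_right ?_ _
        rw [← lintegral_map hφm (hTm j)]
        exact hTc j φ hφ hφ0
    _ = ∫⁻ x, ENNReal.ofReal (φ x) ∂(∑ j, ENNReal.ofReal (lam j) • ν j) := by
        rw [lintegral_finset_sum_measure]
        exact Finset.sum_congr rfl fun j _ => (by rw [lintegral_smul_measure, smul_eq_mul])
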